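/- arXiv:2003.00331 — 4 statements merged into one kernel-verified Lean document; each statement's English description precedes it below -/
import Mathlib

section
/- Theorem 1 (dependency service invariant): Fix f ∈ ℕ and a finite set D of 2f+1 dependency service nodes. Suppose the dependency service produces a response deps_x = ⋃_{d ∈ Q_x} deps_d(v_x) for vertex v_x via a quorum Q_x ⊆ D with |Q_x| ≥ f+1 and v_x ∈ P_d for every d ∈ Q_x, and similarly a response deps_y via a quorum Q_y for a distinct vertex v_y. If the commands cmd(v_x) and cmd(v_y) conflict, then v_x ∈ deps_y or v_y ∈ deps_x (or both). -/
/-- Theorem 1 (dependency service invariant). If the dependency service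
produces responses `depsx` and `depsy` for distinct vertices `vx` and `vy`
holding conflicting commands, then `vx ∈ depsy` or `vy ∈ depsx` (or both). -/
theorem dependency_service_invariant {N V C : Type*}
    (f : ℕ) (D : Finset N) (hD : D.card = 2 * f + 1)
    (cmd : V → C) (conflict : C → C → Prop)
    (hsymm : ∀ x y, conflict x y → conflict y x)
    -- each node `d` has a set `P d` of processed vertices and a strict total
    -- order `lt d` on `P d` (the order in which it received them)
    (P : N → Finset V) (lt : N → V → V → Prop)
    (hirrefl : ∀ d, ∀ u ∈ P d, ¬ lt d u u)
    (htrans : ∀ d, ∀ u ∈ P d, ∀ v ∈ P d, ∀ w ∈ P d,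
      lt d u v → lt d v w → lt d u w)
    (htotal : ∀ d, ∀ u ∈ P d, ∀ v ∈ P d, u ≠ v → lt d u v ∨ lt d v u)
    (vx vy : V) (hne : vx ≠ vy)
    (Qx Qy : Finset N) (hQxD : Qx ⊆ D) (hQyD : Qy ⊆ D)
    (hQx : f + 1 ≤ Qx.card) (hQy : f + 1 ≤ Qy.card)
    (hPx : ∀ d ∈ Qx, vx ∈ P d) (hPy : ∀ d ∈ Qy, vy ∈ P d)
    (depsx depsy : Set V)
    (hdx : depsx = ⋃ d ∈ Qx, {u | u ∈ P d ∧ lt d u vx ∧ conflict (cmd u) (cmd vx)})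
    (hdy : depsy = ⋃ d ∈ Qy, {u | u ∈ P d ∧ lt d u vy ∧ conflict (cmd u) (cmd vy)})
    (hconf : conflict (cmd vx) (cmd vy)) :
    vx ∈ depsy ∨ vy ∈ depsx := by
  classical
  have hinter : (Qx ∩ Qy).Nonempty := by
    rw [← Finset.card_pos]
    have h1 : Qx.card + Qy.card - (Qx ∪ Qy).card ≤ (Qx ∩ Qy).card :=
      le_of_eq (by rw [← Finset.card_union_add_card_inter]; omega)
    have h2 : (Qx ∪ Qy).card ≤ D.card :=
      Finset.card_le_card (Finset.union_subset hQxD hQyD)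
    omega
  obtain ⟨d, hd⟩ := hinter
  have hdx' : d ∈ Qx := Finset.mem_inter.mp hd |>.1
  have hdy' : d ∈ Qy := Finset.mem_inter.mp hd |>.2
  have hvx : vx ∈ P d := hPx d hdx'
  have hvy : vy ∈ P d := hPy d hdy'
  rcases htotal d vx hvx vy hvy hne with h | h
  · left
    rw [hdy]
    exact Set.mem_biUnion hdy' ⟨hvx, h, hconf⟩
  · right
    rw [hdx]
    exact Set.mem_biUnion hdx' ⟨hvy, h, hsymm _ _ hconf⟩
end

section
/- Dependency invariant for chosen vertices (ChosenConflicts): Suppose that for every vertex v in some set Chosen ⊆ V, the chosen pair (x_v, deps(v)) is either the noop proposal (a command noop that conflicts with no command, with deps(v) = ∅) or a dependency-service response for v with command x_v = cmd(v), produced over 2f+1 dependency service nodes via a quorum of at least f+1 nodes. Then for any two distinct vertices v_x, v_y ∈ Chosen whose chosen commands conflict, either v_x ∈ deps(v_y) or v_y ∈ deps(v_x). -/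
/-- Dependency invariant for chosen vertices (ChosenConflicts): if each chosen
vertex holds either the noop proposal (with empty dependencies) or a
dependency-service response for that vertex, then any two distinct chosen
vertices with conflicting chosen commands have at least one dependency edge
between them. -/
theorem chosen_conflicts {N V C : Type*}
    (f : ℕ) (D : Finset N) (hD : D.card = 2 * f + 1)
    (cmd : V → C) (conflict : C → C → Prop)
    (hsymm : ∀ x y, conflict x y → conflict y x)
    -- each node `d` has a set `P d` of processed vertices and a strict total
    -- order `lt d` on `P d` (the order in which it received them)
    (P : N → Finset V) (lt : N → V → V → Prop)
    (hirrefl : ∀ d, ∀ u ∈ P d, ¬ lt d u u)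
    (htrans : ∀ d, ∀ u ∈ P d, ∀ v ∈ P d, ∀ w ∈ P d,
      lt d u v → lt d v w → lt d u w)
    (htotal : ∀ d, ∀ u ∈ P d, ∀ v ∈ P d, u ≠ v → lt d u v ∨ lt d v u)
    -- the noop command conflicts with no command
    (noop : C) (hnoop : ∀ c, ¬ conflict noop c)
    -- for each chosen vertex `v`, the chosen command `xcmd v` and chosen
    -- dependencies `deps v`
    (Chosen : Set V) (xcmd : V → C) (deps : V → Set V)
    (hchosen : ∀ v ∈ Chosen,
      (xcmd v = noop ∧ deps v = ∅) ∨
      (xcmd v = cmd v ∧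
        ∃ Q : Finset N, Q ⊆ D ∧ f + 1 ≤ Q.card ∧ (∀ d ∈ Q, v ∈ P d) ∧
          deps v = ⋃ d ∈ Q, {u | u ∈ P d ∧ lt d u v ∧ conflict (cmd u) (cmd v)})) :
    ∀ vx ∈ Chosen, ∀ vy ∈ Chosen, vx ≠ vy →
      conflict (xcmd vx) (xcmd vy) →
      vx ∈ deps vy ∨ vy ∈ deps vx := by

  classical
  intro vx hvx vy hvy hne hconf
  rcases hchosen vx hvx with ⟨hx, _⟩ | ⟨hx, Qx, hQxD, hQxc, hQxP, hdx⟩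
  · exact absurd hconf (hx ▸ hnoop _)
  rcases hchosen vy hvy with ⟨hy, _⟩ | ⟨hy, Qy, hQyD, hQyc, hQyP, hdy⟩
  · exact absurd (hsymm _ _ hconf) (hy ▸ hnoop _)
  rw [hx, hy] at hconf
  -- quorum intersection
  have hinter : (Qx ∩ Qy).Nonempty := by
    rw [← Finset.card_pos]
    have h1 : Qx.card + Qy.card - (Qx ∪ Qy).card ≤ (Qx ∩ Qy).card := by
      have := Finset.card_union_add_card_inter Qx Qy
      omega
    have h2 : (Qx ∪ Qy).card ≤ D.card :=
      Finset.card_le_card (Finset.union_subset hQxD hQyD)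
    omega
  obtain ⟨d, hd⟩ := hinter
  have hdx' : d ∈ Qx := Finset.mem_of_mem_inter_left hd
  have hdy' : d ∈ Qy := Finset.mem_of_mem_inter_right hd
  have hPx := hQxP d hdx'
  have hPy := hQyP d hdy'
  rcases htotal d vx hPx vy hPy hne with h | h
  · left
    rw [hdy]
    exact Set.mem_biUnion hdy' ⟨hPx, h, hconf⟩
  · right
    rw [hdx]
    exact Set.mem_biUnion hdx' ⟨hPy, h, hsymm _ _ hconf⟩
end

section
/- Permutations preserving the order of conflicting commands yield the same final state: Let S be a type of states, C a type of commands, exec : S → C → S a deterministic state machine, and conflict a symmetric relation on C such that any two non-conflicting commands commute, i.e., if ¬conflict(x, y) then exec (exec s x) y = exec (exec s y) x for every state s. Let V be a type of vertex ids with a function cmd : V → C, and let l1 and l2 be duplicate-free lists over V containing exactly the same elements. If for every pair of vertices u, v with conflict(cmd u, cmd v), u occurs before v in l1 exactly when u occurs before v in l2, then List.foldl (fun s v => exec s (cmd v)) s0 l1 = List.foldl (fun s v => exec s (cmd v)) s0 l2 for every initial state s0. -/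
/-- Index comparison is preserved when removing a middle element. -/
lemma idx_erase_iff {V : Type*} [DecidableEq V] (p q : List V) (a u v : V)
    (_hu : u ∈ p ++ q) (_hv : v ∈ p ++ q) (hua : a ≠ u) (hva : a ≠ v) :
    (p ++ q).idxOf u < (p ++ q).idxOf v ↔
      (p ++ a :: q).idxOf u < (p ++ a :: q).idxOf v := by
  by_cases hup : u ∈ p <;> by_cases hvp : v ∈ p
  · rw [List.idxOf_append_of_mem hup, List.idxOf_append_of_mem hvp,
      List.idxOf_append_of_mem hup, List.idxOf_append_of_mem hvp]
  · have h1 := List.idxOf_append_of_mem (l₂ := q) hup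
    have h2 := List.idxOf_append_of_mem (l₂ := a :: q) hup
    have h3 := List.idxOf_append_of_notMem (a := v) (l₂ := q) hvp
    have h4 := List.idxOf_append_of_notMem (a := v) (l₂ := a :: q) hvp
    have hlt := List.idxOf_lt_length_iff.2 hup
    constructor <;> intro _ <;> omega
  · have h1 := List.idxOf_append_of_notMem (a := u) (l₂ := q) hup
    have h2 := List.idxOf_append_of_notMem (a := u) (l₂ := a :: q) hup
    have h3 := List.idxOf_append_of_mem (l₂ := q) hvp
    have h4 := List.idxOf_append_of_mem (l₂ := a :: q) hvp
    have hlt := List.idxOf_lt_length_iff.2 hvp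
    constructor <;> intro h <;> omega
  · have h1 := List.idxOf_append_of_notMem (a := u) (l₂ := q) hup
    have h2 := List.idxOf_append_of_notMem (a := u) (l₂ := a :: q) hup
    have h3 := List.idxOf_append_of_notMem (a := v) (l₂ := q) hvp
    have h4 := List.idxOf_append_of_notMem (a := v) (l₂ := a :: q) hvp
    have h5 := List.idxOf_cons_ne (a := u) q hua
    have h6 := List.idxOf_cons_ne (a := v) q hva
    constructor <;> intro h <;> omega

/-- A command commuting with everything before it can be moved to the front. -/
lemma foldl_move_front {S V : Type*} (f : S → V → S) (a : V) :
    ∀ (p q : List V), (∀ x ∈ p, ∀ s : S, f (f s x) a = f (f s a) x) →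
      ∀ s : S, List.foldl f s (p ++ a :: q) = List.foldl f (f s a) (p ++ q) := by
  intro p
  induction p with
  | nil => intro q _ s; simp
  | cons b p ih =>
      intro q hcom s
      simp only [List.cons_append, List.foldl_cons]
      rw [ih q (fun x hx => hcom x (List.mem_cons_of_mem _ hx)),
        hcom b (List.mem_cons_self)]

/-- Permutations preserving the relative order of conflicting commands yield
the same final state. -/
theorem conflict_order_preserving_foldl {S C V : Type*} [DecidableEq V]
    (exec : S → C → S) (conflict : C → C → Prop)
    (hsymm : ∀ x y, conflict x y → conflict y x)
    (hcomm : ∀ x y, ¬ conflict x y → ∀ s : S,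
      exec (exec s x) y = exec (exec s y) x)
    (cmd : V → C) (l1 l2 : List V)
    (hnd1 : l1.Nodup) (hnd2 : l2.Nodup)
    (hmem : ∀ v, v ∈ l1 ↔ v ∈ l2)
    (horder : ∀ u ∈ l1, ∀ v ∈ l1, conflict (cmd u) (cmd v) →
      (l1.idxOf u < l1.idxOf v ↔ l2.idxOf u < l2.idxOf v)) :
    ∀ s0 : S,
      List.foldl (fun s v => exec s (cmd v)) s0 l1 =
      List.foldl (fun s v => exec s (cmd v)) s0 l2 := by
  induction l1 generalizing l2 with
  | nil =>
      have : l2 = [] := List.eq_nil_iff_forall_not_mem.2 fun v hv =>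
        List.not_mem_nil ((hmem v).2 hv)
      subst this; intro s0; rfl
  | cons a t1 ih =>
      intro s0
      have ha2 : a ∈ l2 := (hmem a).1 (List.mem_cons_self)
      obtain ⟨p, q, rfl⟩ := List.append_of_mem ha2
      have hnd2' := hnd2
      rw [List.nodup_append] at hnd2'
      have hap : a ∉ p := fun h => hnd2'.2.2 a h a List.mem_cons_self rfl
      have hat1 : a ∉ t1 := (List.nodup_cons.1 hnd1).1
      have haidx : ∀ x : V, a ≠ x → x ∈ p ++ a :: q → x ∈ p ++ q := by
        intro x hax hx
        rcases List.mem_append.1 hx with h | h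
        · exact List.mem_append.2 (Or.inl h)
        · rcases List.mem_cons.1 h with h | h
          · exact absurd h.symm hax
          · exact List.mem_append.2 (Or.inr h)
      -- no element of p conflicts with a
      have hpnc : ∀ x ∈ p, ¬ conflict (cmd x) (cmd a) := by
        intro x hxp hc
        have hax : a ≠ x := fun h => hap (h ▸ hxp)
        have hx1 : x ∈ a :: t1 := (hmem x).2 (List.mem_append.2 (Or.inl hxp))
        have hx0 : (a :: t1).idxOf a < (a :: t1).idxOf x := by
          rw [List.idxOf_cons_self, List.idxOf_cons_ne _ hax]
          exact Nat.succ_pos _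
        have := (horder a (List.mem_cons_self) x hx1 (hsymm _ _ hc)).1 hx0
        rw [List.idxOf_append_of_notMem hap, List.idxOf_cons_self,
          List.idxOf_append_of_mem hxp] at this
        have := List.idxOf_lt_length_iff.2 hxp
        omega
      have hstep : List.foldl (fun s v => exec s (cmd v)) s0 (p ++ a :: q) =
          List.foldl (fun s v => exec s (cmd v)) (exec s0 (cmd a)) (p ++ q) :=
        foldl_move_front (fun s v => exec s (cmd v)) a p q
          (fun x hx s => hcomm _ _ (hpnc x hx) s) s0
      rw [hstep, List.foldl_cons]
      exact ih (p ++ q) (List.nodup_cons.1 hnd1).2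
        ((List.Sublist.append (List.Sublist.refl p)
          (List.sublist_cons_self a q)).nodup hnd2)
        (by
          intro v
          constructor
          · intro hv
            have hav : a ≠ v := fun h => hat1 (h ▸ hv)
            exact haidx v hav ((hmem v).1 (List.mem_cons_of_mem _ hv))
          · intro hv
            have hv2 : v ∈ p ++ a :: q :=
              (List.Sublist.append (List.Sublist.refl p)
                (List.sublist_cons_self a q)).mem hv
            have hv1 := (hmem v).2 hv2
            rcases List.mem_cons.1 hv1 with h | h
            · subst h
              exact absurd hv (by
                rw [List.mem_append, not_or]
                exact ⟨hap, (List.nodup_cons.1 hnd2'.2.1).1⟩)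
            · exact h)
        (by
          intro u hu v hv hc
          have hau : a ≠ u := fun h => hat1 (h ▸ hu)
          have hav : a ≠ v := fun h => hat1 (h ▸ hv)
          have hu1 : u ∈ a :: t1 := List.mem_cons_of_mem _ hu
          have hv1 : v ∈ a :: t1 := List.mem_cons_of_mem _ hv
          have h1 : t1.idxOf u < t1.idxOf v ↔
              (a :: t1).idxOf u < (a :: t1).idxOf v := by
            rw [List.idxOf_cons_ne _ hau, List.idxOf_cons_ne _ hav]
            omega
          have hu2 : u ∈ p ++ q :=
            haidx u hau ((hmem u).1 hu1)
          have hv2 : v ∈ p ++ q :=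
            haidx v hav ((hmem v).1 hv1)
          rw [h1, horder u hu1 v hv1 hc]
          exact (idx_erase_iff p q a u v hu2 hv2 hau hav).symm)
        (exec s0 (cmd a))
end

section
/- Replica agreement under the dependency invariant: Let V be a finite type of vertex ids, C a type of commands, cmd : V → C, and conflict a symmetric relation on C. Let exec : S → C → S be a state machine such that non-conflicting commands commute (¬conflict(x, y) implies exec (exec s x) y = exec (exec s y) x for all s). Let dep be a relation on V satisfying the dependency invariant: for all distinct u, v with conflict(cmd u, cmd v), dep u v or dep v u. Write a ~ b when a and b are mutually reachable via dep. Let L1 and L2 be strict linear orders on V such that (i) for all a, b, dep a b and ¬(a ~ b) imply b <_{Li} a for i = 1, 2, and (ii) L1 and L2 agree on every pair a, b with a ~ b. Then executing all vertices of V in the order L1 from initial state s0 (applying exec to cmd of each vertex in turn) yields the same final state as executing them in the order L2. -/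
theorem fold_move {V S : Type*} (f : S → V → S) (a : V) :
    ∀ (p q : List V), (∀ x ∈ p, ∀ s : S, f (f s x) a = f (f s a) x) →
    ∀ s : S, List.foldl f s (p ++ a :: q) = List.foldl f (f s a) (p ++ q)
  | [], q, _, s => rfl
  | x :: p, q, h, s => by
    simp only [List.cons_append, List.foldl_cons]
    rw [fold_move f a p q (fun y hy => h y (List.mem_cons_of_mem _ hy)),
      h x (List.mem_cons_self)]

theorem fold_aux {V S : Type*} (f : S → V → S) (lt1 lt2 : V → V → Prop)
    (hc : ∀ u v, lt1 u v → lt2 v u → ∀ s : S, f (f s u) v = f (f s v) u) :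
    ∀ l1 l2 : List V, l1.Perm l2 → l1.Pairwise lt1 → l2.Pairwise lt2 →
    ∀ s : S, List.foldl f s l1 = List.foldl f s l2
  | [], l2, hp, _, _, s => by rw [hp.nil_eq]
  | a :: t, l2, hp, hp1, hp2, s => by
    have ha : a ∈ l2 := hp.subset (List.mem_cons_self)
    obtain ⟨p, q, rfl⟩ := List.append_of_mem ha
    have hperm : t.Perm (p ++ q) := by
      have := hp.trans (List.perm_middle)
      exact this.cons_inv
    have hlt2 : ∀ x ∈ p, lt2 x a := by
      intro x hx
      exact (List.pairwise_append.1 hp2).2.2 x hx a (List.mem_cons_self)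
    have hlt1 : ∀ x ∈ p, lt1 a x := by
      intro x hx
      exact (List.pairwise_cons.1 hp1).1 x
        (hperm.symm.subset (List.mem_append_left _ hx))
    rw [fold_move f a p q (fun x hx s' => (hc a x (hlt1 x hx) (hlt2 x hx) s').symm)]
    exact fold_aux f lt1 lt2 hc t (p ++ q) hperm (List.pairwise_cons.1 hp1).2
      (List.pairwise_append.2 ⟨(List.pairwise_append.1 hp2).1, (List.pairwise_cons.1 (List.pairwise_append.1 hp2).2.1).2,
        fun x hx y hy => (List.pairwise_append.1 hp2).2.2 x hx y (List.mem_cons_of_mem _ hy)⟩)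
      (f s a)


/-- Replica agreement under the dependency invariant: two replicas that execute
all vertices in strict linear orders respecting cross-component dependencies
and agreeing within strongly connected components reach the same final state. -/
theorem replica_agreement {V C S : Type*} [Fintype V]
    (cmd : V → C) (conflict : C → C → Prop)
    (hsymm : ∀ x y, conflict x y → conflict y x)
    (exec : S → C → S)
    (hcomm : ∀ x y, ¬ conflict x y → ∀ s : S,
      exec (exec s x) y = exec (exec s y) x)
    (dep : V → V → Prop)
    -- the dependency invariant
    (hdepinv : ∀ u v, u ≠ v → conflict (cmd u) (cmd v) → dep u v ∨ dep v u)
    (lt1 lt2 : V → V → Prop)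
    (h1 : IsStrictTotalOrder V lt1) (h2 : IsStrictTotalOrder V lt2)
    (hi1 : ∀ a b, dep a b →
      ¬ (Relation.ReflTransGen dep a b ∧ Relation.ReflTransGen dep b a) →
      lt1 b a)
    (hi2 : ∀ a b, dep a b →
      ¬ (Relation.ReflTransGen dep a b ∧ Relation.ReflTransGen dep b a) →
      lt2 b a)
    (hagree : ∀ a b,
      (Relation.ReflTransGen dep a b ∧ Relation.ReflTransGen dep b a) →
      (lt1 a b ↔ lt2 a b))
    -- `l1` and `l2` enumerate all vertices of `V` in the orders `lt1`, `lt2`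
    (l1 l2 : List V)
    (hmem1 : ∀ v, v ∈ l1) (hsort1 : l1.Pairwise lt1)
    (hmem2 : ∀ v, v ∈ l2) (hsort2 : l2.Pairwise lt2)
    (s0 : S) :
    List.foldl (fun s v => exec s (cmd v)) s0 l1 =
    List.foldl (fun s v => exec s (cmd v)) s0 l2 := by
  haveI := h1; haveI := h2
  have hasym1 : ∀ {a b : V}, lt1 a b → ¬ lt1 b a := fun h => asymm h
  have hasym2 : ∀ {a b : V}, lt2 a b → ¬ lt2 b a := fun h => asymm h
  have hne1 : ∀ {a b : V}, lt1 a b → a ≠ b := fun h heq =>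
    irrefl _ (heq ▸ h)
  have hnd1 : l1.Nodup := hsort1.nodup
  have hnd2 : l2.Nodup := hsort2.nodup
  have hperm : l1.Perm l2 :=
    (List.perm_ext_iff_of_nodup hnd1 hnd2).2 fun v => by simp [hmem1 v, hmem2 v]
  refine fold_aux _ lt1 lt2 ?_ l1 l2 hperm hsort1 hsort2 s0
  intro u v hu hv s
  have hne : u ≠ v := hne1 hu
  have : ¬ conflict (cmd u) (cmd v) := by
    intro hconf
    rcases hdepinv u v hne hconf with hd | hd
    · by_cases hcyc : Relation.ReflTransGen dep u v ∧ Relation.ReflTransGen dep v u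
      · exact hasym2 ((hagree u v hcyc).1 hu) hv
      · exact hasym1 hu (hi1 u v hd hcyc)
    · by_cases hcyc : Relation.ReflTransGen dep v u ∧ Relation.ReflTransGen dep u v
      · exact hasym1 hu ((hagree v u hcyc).2 hv)
      · exact hasym2 hv (hi2 v u hd hcyc)
  exact hcomm _ _ this s
end
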